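/- Monotonicity of the SAFFRON update rule (Lemma 1): if λ_t = h_t(α_t) for non-decreasing functions h_t: (0,1) → (0,1) with h_t(x) ≥ x, then the levels produced by the SAFFRON update rule are monotone; that is, whenever two binary histories satisfy (R_{1:t-1}, C_{1:t-1}) ≥ (R̃_{1:t-1}, C̃_{1:t-1}) coordinatewise, the corresponding levels satisfy α_t ≥ α̃_t and λ_t ≥ λ̃_t. -/

import Mathlib

/-- The SAFFRON wealth sum `s_t(R_{1:t-1}, C_{1:t-1})`.  With `τ_j` the index of the `j`-th
rejection (`τ_0 = 0`) and `C_{j+} = Σ_{i=τ_j+1}^{t-1} C_i`, this is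
`W₀·γ_{t−C_{0+}} + (α−W₀)·γ_{t−τ_1−C_{1+}} + Σ_{j≥2} α·γ_{t−τ_j−C_{j+}}`,
written as a sum over the rejection times `i ∈ {1, ..., t-1}` with `R_i = 1`:
a rejection at time `i` contributes `(α−W₀)` (if it is the first rejection) or `α`
(otherwise) times `γ_{t − i − #{candidates in (i, t-1]}}`. -/
noncomputable def saffronSum (q W0 : ℝ) (γ : ℕ → ℝ) (t : ℕ) (R C : ℕ → Bool) : ℝ :=
  W0 * γ (t - ((Finset.Icc 1 (t - 1)).filter fun i => C i = true).card) +
    ∑ i ∈ (Finset.Icc 1 (t - 1)).filter (fun i => R i = true),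
      (if ((Finset.Icc 1 i).filter fun k => R k = true).card = 1 then q - W0 else q) *
        γ (t - i - ((Finset.Icc (i + 1) (t - 1)).filter fun k => C k = true).card)

lemma saffronSum_mono (q W0 : ℝ) (hW0pos : 0 < W0) (hW0le : W0 ≤ q)
    (γ : ℕ → ℝ) (hγpos : ∀ j, 1 ≤ j → 0 < γ j)
    (hγanti : ∀ j k, 1 ≤ j → j ≤ k → γ k ≤ γ j)
    (t : ℕ) (R C R' C' : ℕ → Bool)
    (hR : ∀ i, R' i = true → R i = true) (hC : ∀ i, C' i = true → C i = true) :
    saffronSum q W0 γ t R' C' ≤ saffronSum q W0 γ t R C := by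
  unfold saffronSum
  have hfilC : ∀ a b : ℕ, ((Finset.Icc a b).filter fun k => C' k = true).card ≤
      ((Finset.Icc a b).filter fun k => C k = true).card := by
    intro a b
    exact Finset.card_le_card (Finset.monotone_filter_right _ (fun x _ hx => hC x hx))
  have hcardIcc : ∀ a b : ℕ, ∀ P : ℕ → Bool,
      ((Finset.Icc a b).filter fun k => P k = true).card ≤ b + 1 - a := by
    intro a b P
    calc ((Finset.Icc a b).filter fun k => P k = true).card ≤ (Finset.Icc a b).card :=
          Finset.card_le_card (Finset.filter_subset _ _)
      _ = b + 1 - a := Nat.card_Icc a b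
  apply add_le_add
  · by_cases ht : t = 0
    · subst ht; simp
    · have h1t : 1 ≤ t := Nat.one_le_iff_ne_zero.mpr ht
      have hc0 : ((Finset.Icc 1 (t-1)).filter fun k => C k = true).card ≤ t - 1 := by
        have := hcardIcc 1 (t-1) C; omega
      have hc0' := hfilC 1 (t-1)
      apply mul_le_mul_of_nonneg_left _ hW0pos.le
      exact hγanti _ _ (by omega) (by omega)
  · -- sums
    calc (∑ i ∈ (Finset.Icc 1 (t - 1)).filter (fun i => R' i = true),
          (if ((Finset.Icc 1 i).filter fun k => R' k = true).card = 1 then q - W0 else q) *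
            γ (t - i - ((Finset.Icc (i + 1) (t - 1)).filter fun k => C' k = true).card))
        ≤ ∑ i ∈ (Finset.Icc 1 (t - 1)).filter (fun i => R' i = true),
          (if ((Finset.Icc 1 i).filter fun k => R k = true).card = 1 then q - W0 else q) *
            γ (t - i - ((Finset.Icc (i + 1) (t - 1)).filter fun k => C k = true).card) := by
          apply Finset.sum_le_sum
          intro i hi
          simp only [Finset.mem_filter, Finset.mem_Icc] at hi
          obtain ⟨⟨h1i, hit⟩, hRi⟩ := hi
          have hidx : 1 ≤ t - i - ((Finset.Icc (i + 1) (t - 1)).filter fun k => C k = true).card := by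
            have := hcardIcc (i+1) (t-1) C; omega
          have hidx' : t - i - ((Finset.Icc (i + 1) (t - 1)).filter fun k => C k = true).card ≤
              t - i - ((Finset.Icc (i + 1) (t - 1)).filter fun k => C' k = true).card := by
            have := hfilC (i+1) (t-1); omega
          have hγle := hγanti _ _ hidx hidx'
          have hγ'pos : (0:ℝ) ≤ γ (t - i - ((Finset.Icc (i + 1) (t - 1)).filter fun k => C' k = true).card) :=
            (hγpos _ (le_trans hidx hidx')).le
          have hw : (if ((Finset.Icc 1 i).filter fun k => R' k = true).card = 1 then q - W0 else q) ≤
              (if ((Finset.Icc 1 i).filter fun k => R k = true).card = 1 then q - W0 else q) := by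
            have hsub : ((Finset.Icc 1 i).filter fun k => R' k = true).card ≤
                ((Finset.Icc 1 i).filter fun k => R k = true).card :=
              Finset.card_le_card (Finset.monotone_filter_right _ (fun x _ hx => hR x hx))
            have hmem : 1 ≤ ((Finset.Icc 1 i).filter fun k => R' k = true).card := by
              refine Finset.card_pos.mpr ⟨i, ?_⟩
              simp [Finset.mem_filter, Finset.mem_Icc, h1i, hRi]
            split_ifs with h1 h2
            · exact le_refl _
            · linarith
            · omega
            · exact le_refl _
          have hw' : (0:ℝ) ≤ (if ((Finset.Icc 1 i).filter fun k => R' k = true).card = 1 then q - W0 else q) := by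
            split_ifs <;> linarith
          exact mul_le_mul hw hγle hγ'pos (le_trans hw' hw)
      _ ≤ ∑ i ∈ (Finset.Icc 1 (t - 1)).filter (fun i => R i = true),
          (if ((Finset.Icc 1 i).filter fun k => R k = true).card = 1 then q - W0 else q) *
            γ (t - i - ((Finset.Icc (i + 1) (t - 1)).filter fun k => C k = true).card) := by
          apply Finset.sum_le_sum_of_subset_of_nonneg
          · exact Finset.monotone_filter_right _ (fun x _ hx => hR x hx)
          · intro i hi _
            simp only [Finset.mem_filter, Finset.mem_Icc] at hi
            obtain ⟨⟨h1i, hit⟩, hRi⟩ := hi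
            have hidx : 1 ≤ t - i - ((Finset.Icc (i + 1) (t - 1)).filter fun k => C k = true).card := by
              have := hcardIcc (i+1) (t-1) C; omega
            have := (hγpos _ hidx).le
            have : (0:ℝ) ≤ (if ((Finset.Icc 1 i).filter fun k => R k = true).card = 1 then q - W0 else q) := by
              split_ifs <;> linarith
            positivity

/-- Lemma 1 (monotonicity of the SAFFRON update rule): if `λ_t = h_t(α_t)` for a
non-decreasing function `h_t : (0,1) → (0,1)` with `h_t(x) ≥ x`, then the levels produced
by the SAFFRON update rule `α_t = (1 − h_t(α_t)) · s_t(R_{1:t-1}, C_{1:t-1})` are monotone: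
whenever two binary histories satisfy `(R_{1:t-1}, C_{1:t-1}) ≥ (R̃_{1:t-1}, C̃_{1:t-1})`
coordinatewise, the corresponding levels satisfy `α_t ≥ α̃_t` and `λ_t ≥ λ̃_t`. -/
theorem saffron_update_monotone (q W0 : ℝ) (hq : q ∈ Set.Ioo (0 : ℝ) 1)
    (hW0pos : 0 < W0) (hW0le : W0 ≤ q)
    (γ : ℕ → ℝ) (hγpos : ∀ j, 1 ≤ j → 0 < γ j)
    (hγanti : ∀ j k, 1 ≤ j → j ≤ k → γ k ≤ γ j)
    (hγsum : ∑' j : ℕ, γ (j + 1) = 1)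
    (t : ℕ)
    -- the function `h_t : (0,1) → (0,1)`, non-decreasing and satisfying `h_t(x) ≥ x`
    (h : ℝ → ℝ) (hmap : ∀ x ∈ Set.Ioo (0 : ℝ) 1, h x ∈ Set.Ioo (0 : ℝ) 1)
    (hmono : MonotoneOn h (Set.Ioo (0 : ℝ) 1))
    (hge : ∀ x ∈ Set.Ioo (0 : ℝ) 1, x ≤ h x)
    -- two coordinatewise-ordered binary histories
    (R C R' C' : ℕ → Bool)
    (hR : ∀ i, R' i = true → R i = true) (hC : ∀ i, C' i = true → C i = true)
    -- the levels `α_t` and `α̃_t` produced by the SAFFRON update rule, with `λ_t = h_t(α_t)`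
    (a a' : ℝ) (ha : a ∈ Set.Ioo (0 : ℝ) 1) (ha' : a' ∈ Set.Ioo (0 : ℝ) 1)
    (heq : a = (1 - h a) * saffronSum q W0 γ t R C)
    (heq' : a' = (1 - h a') * saffronSum q W0 γ t R' C') :
    a' ≤ a ∧ h a' ≤ h a := by
  have hs : saffronSum q W0 γ t R' C' ≤ saffronSum q W0 γ t R C :=
    saffronSum_mono q W0 hW0pos hW0le γ hγpos hγanti t R C R' C' hR hC
  obtain ⟨hha0, hha1⟩ := hmap a ha
  obtain ⟨hha'0, hha'1⟩ := hmap a' ha'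
  have hs'pos : 0 < saffronSum q W0 γ t R' C' := by
    by_contra hcon
    push_neg at hcon
    have : a' ≤ 0 := by
      rw [heq']
      have : 0 ≤ 1 - h a' := by linarith
      nlinarith
    linarith [ha'.1]
  have hspos : 0 < saffronSum q W0 γ t R C := lt_of_lt_of_le hs'pos hs
  by_cases hle : a' ≤ a
  · exact ⟨hle, hmono ha' ha hle⟩
  · exfalso
    push_neg at hle
    have h1 : h a ≤ h a' := hmono ha ha' hle.le
    have h2 : a' ≤ a := by
      rw [heq, heq']
      calc (1 - h a') * saffronSum q W0 γ t R' C'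
          ≤ (1 - h a') * saffronSum q W0 γ t R C :=
            mul_le_mul_of_nonneg_left hs (by linarith)
        _ ≤ (1 - h a) * saffronSum q W0 γ t R C :=
            mul_le_mul_of_nonneg_right (by linarith) hspos.le
    linarith
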